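/- Let p ≥ 2 be an integer. If χ = C_p and α < 0, then F^p_{m,α} has no critical point in R^p. -/

import Mathlib

open scoped BigOperators
noncomputable section

/-- Internal (diffusion) part: sum of (X_{i+1} - X_i)^(1-m) over consecutive gaps. -/
def gapSum (m : ℝ) (p : ℕ) (X : EuclideanSpace ℝ (Fin p)) : ℝ :=
  ∑ i : Fin p, if h : (i : ℕ) + 1 < p then (X ⟨(i : ℕ) + 1, h⟩ - X i) ^ (1 - m) else 0

/-- Interaction part: sum of |X_i - X_j|^(1-m) over ordered pairs i ≠ j. -/
def pairSum (m : ℝ) (p : ℕ) (X : EuclideanSpace ℝ (Fin p)) : ℝ :=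
  ∑ i : Fin p, ∑ j : Fin p, if i ≠ j then |X i - X j| ^ (1 - m) else 0

/-- The discrete free energy F^p_m. -/
def FF (m χ : ℝ) (p : ℕ) (X : EuclideanSpace ℝ (Fin p)) : ℝ :=
  (m - 1)⁻¹ * gapSum m p X - (χ / (m - 1)) * pairSum m p X

/-- Membership in R^p: strictly increasing with zero mean. -/
def memR (p : ℕ) (X : EuclideanSpace ℝ (Fin p)) : Prop :=
  (StrictMono fun i => X i) ∧ ∑ i, X i = 0

/-- The critical constant C_p, with 1/C_p the sup of the HLS ratio. -/
def Cp (m : ℝ) (p : ℕ) : ℝ :=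
  (sSup {r : ℝ | ∃ X : EuclideanSpace ℝ (Fin p), memR p X ∧
    r = pairSum m p X / gapSum m p X})⁻¹

/-- The functional F^p_{m,α} with confining quadratic potential. -/
def FFa (m χ α : ℝ) (p : ℕ) (X : EuclideanSpace ℝ (Fin p)) : ℝ :=
  FF m χ p X + α / 2 * ‖X‖ ^ 2

/-- H^N_{m+1}(Y) = |∇F^N_m(Y)|² − ((m−1) F^N_m(Y))². -/
def Hfun (m χ : ℝ) (N : ℕ) (Y : EuclideanSpace ℝ (Fin N)) : ℝ :=
  ‖gradient (FF m χ N) Y‖ ^ 2 - ((m - 1) * FF m χ N Y) ^ 2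

/-- X : [0,T) → R^N is a solution of the gradient flow of F^N_m. -/
def isGFlow (m χ : ℝ) (N : ℕ) (T : ℝ) (X : ℝ → EuclideanSpace ℝ (Fin N)) : Prop :=
  ∀ t ∈ Set.Ico (0 : ℝ) T, memR N (X t) ∧
    HasDerivWithinAt X (-(gradient (FF m χ N) (X t))) (Set.Ico (0 : ℝ) T) t

/-- The gap Y_{i+1} - Y_i (0 if i+1 is out of range). -/
def gapAt (N : ℕ) (Y : EuclideanSpace ℝ (Fin N)) (i : ℕ) : ℝ :=
  if h : i + 1 < N then Y ⟨i + 1, h⟩ - Y ⟨i, Nat.lt_of_succ_lt h⟩ else 0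

variable {m χ : ℝ} {p : ℕ}

lemma diffAt_coord (j : Fin p) (V : EuclideanSpace ℝ (Fin p)) :
    DifferentiableAt ℝ (fun X : EuclideanSpace ℝ (Fin p) => X j) V :=
  (EuclideanSpace.proj j : EuclideanSpace ℝ (Fin p) →L[ℝ] ℝ).differentiableAt

lemma gap_pos {V : EuclideanSpace ℝ (Fin p)} (hmono : StrictMono fun i => V i)
    (i : Fin p) (h : (i : ℕ) + 1 < p) : 0 < V ⟨(i : ℕ) + 1, h⟩ - V i :=
  sub_pos.mpr (hmono (show i < ⟨(i : ℕ) + 1, h⟩ from Fin.mk_lt_mk.mpr (Nat.lt_succ_self _) |>.trans_le le_rfl))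

lemma gapSum_pos (hp : 2 ≤ p) {V : EuclideanSpace ℝ (Fin p)}
    (hmono : StrictMono fun i => V i) : 0 < gapSum m p V := by
  unfold gapSum
  have h0 : (0 : ℕ) + 1 < p := by omega
  apply Finset.sum_pos'
  · intro i _
    by_cases h : (i : ℕ) + 1 < p
    · rw [dif_pos h]; exact (Real.rpow_pos_of_pos (gap_pos hmono i h) _).le
    · rw [dif_neg h]
  · refine ⟨⟨0, by omega⟩, Finset.mem_univ _, ?_⟩
    rw [dif_pos h0]
    exact Real.rpow_pos_of_pos (gap_pos hmono _ h0) _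

lemma pairSum_nonneg {V : EuclideanSpace ℝ (Fin p)} : 0 ≤ pairSum m p V := by
  unfold pairSum
  apply Finset.sum_nonneg; intro i _
  apply Finset.sum_nonneg; intro j _
  split
  · exact Real.rpow_nonneg (abs_nonneg _) _
  · exact le_rfl

lemma diffAt_gapSum {V : EuclideanSpace ℝ (Fin p)} (hmono : StrictMono fun i => V i) :
    DifferentiableAt ℝ (gapSum m p) V := by
  unfold gapSum
  apply DifferentiableAt.fun_sum
  intro i _
  by_cases h : (i : ℕ) + 1 < p
  · simp only [dif_pos h]
    exact ((diffAt_coord _ V).sub (diffAt_coord _ V)).rpow_const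
      (Or.inl (gap_pos hmono i h).ne')
  · simp only [dif_neg h]; exact differentiableAt_const 0

lemma diffAt_pairSum {V : EuclideanSpace ℝ (Fin p)} (hmono : StrictMono fun i => V i) :
    DifferentiableAt ℝ (pairSum m p) V := by
  unfold pairSum
  apply DifferentiableAt.fun_sum; intro i _
  apply DifferentiableAt.fun_sum; intro j _
  by_cases h : i ≠ j
  · simp only [if_pos h]
    have hne : V i - V j ≠ 0 := sub_ne_zero.mpr (fun hc => h (hmono.injective hc))
    exact (((diffAt_coord i V).sub (diffAt_coord j V)).abs hne).rpow_const
      (Or.inl (by simpa [abs_eq_zero] using hne))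
  · simp only [if_neg h]; exact differentiableAt_const 0

lemma diffAt_FF {V : EuclideanSpace ℝ (Fin p)} (hmono : StrictMono fun i => V i) :
    DifferentiableAt ℝ (FF m χ p) V := by
  unfold FF
  exact ((diffAt_gapSum hmono).const_mul _).sub ((diffAt_pairSum hmono).const_mul _)

lemma FF_homog {V : EuclideanSpace ℝ (Fin p)} (hmono : StrictMono fun i => V i)
    {t : ℝ} (ht : 0 < t) : FF m χ p (t • V) = t ^ (1 - m) * FF m χ p V := by
  have hgap : gapSum m p (t • V) = t ^ (1 - m) * gapSum m p V := by
    unfold gapSum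
    rw [Finset.mul_sum]
    apply Finset.sum_congr rfl
    intro i _
    by_cases h : (i : ℕ) + 1 < p
    · rw [dif_pos h, dif_pos h]
      have : (t • V) ⟨(i : ℕ) + 1, h⟩ - (t • V) i = t * (V ⟨(i : ℕ) + 1, h⟩ - V i) := by
        simp only [PiLp.smul_apply, smul_eq_mul]; ring
      rw [this, Real.mul_rpow ht.le (gap_pos hmono i h).le]
    · rw [dif_neg h, dif_neg h, mul_zero]
  have hpair : pairSum m p (t • V) = t ^ (1 - m) * pairSum m p V := by
    unfold pairSum
    rw [Finset.mul_sum]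
    apply Finset.sum_congr rfl
    intro i _
    rw [Finset.mul_sum]
    apply Finset.sum_congr rfl
    intro j _
    by_cases h : i ≠ j
    · rw [if_pos h, if_pos h]
      have : (t • V) i - (t • V) j = t * (V i - V j) := by
        simp only [PiLp.smul_apply, smul_eq_mul]; ring
      rw [this, abs_mul, abs_of_pos ht, Real.mul_rpow ht.le (abs_nonneg _)]
    · rw [if_neg h, if_neg h, mul_zero]
  unfold FF
  rw [hgap, hpair]; ring

theorem stmt5 (m χ : ℝ) (hm : 1 < m) (hχ : 0 < χ) (p : ℕ) (hp : 2 ≤ p)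
    (α : ℝ) (hα : α < 0) (heq : χ = Cp m p) :
    ¬ ∃ V : EuclideanSpace ℝ (Fin p), memR p V ∧ gradient (FFa m χ α p) V = 0 := by
  rintro ⟨V, ⟨hmono, hsum⟩, hgrad⟩
  -- V ≠ 0
  have hVne : V ≠ 0 := by
    intro h
    have h01 : (⟨0, by omega⟩ : Fin p) < ⟨1, by omega⟩ := Fin.mk_lt_mk.mpr Nat.zero_lt_one
    have := hmono h01
    rw [h] at this
    simp at this
  have hVnorm : 0 < ‖V‖ := norm_pos_iff.mpr hVne
  -- FF V ≥ 0
  have hG := gapSum_pos (m := m) hp hmono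
  have hP := pairSum_nonneg (m := m) (V := V)
  set S : Set ℝ := {r : ℝ | ∃ X : EuclideanSpace ℝ (Fin p), memR p X ∧
    r = pairSum m p X / gapSum m p X} with hS
  have hmem : pairSum m p V / gapSum m p V ∈ S := ⟨V, ⟨hmono, hsum⟩, rfl⟩
  have hbdd : BddAbove S := by
    by_contra hb
    rw [heq] at hχ
    unfold Cp at hχ
    rw [csSup_of_not_bddAbove hb, Real.sSup_empty] at hχ
    simp at hχ
  have hsup : pairSum m p V / gapSum m p V ≤ sSup S := le_csSup hbdd hmem
  have hsup_pos : 0 < sSup S := by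
    by_contra h
    push_neg at h
    rw [heq] at hχ
    unfold Cp at hχ
    have := inv_nonpos.mpr h
    rw [← hS] at hχ
    linarith
  have hχ_eq : χ⁻¹ = sSup S := by
    rw [heq]; unfold Cp; rw [← hS, inv_inv]
  have hratio : pairSum m p V / gapSum m p V ≤ χ⁻¹ := by rw [hχ_eq]; exact hsup
  have hkey : χ * pairSum m p V ≤ gapSum m p V := by
    rw [div_le_iff₀ hG] at hratio
    calc χ * pairSum m p V ≤ χ * (χ⁻¹ * gapSum m p V) := by
          apply mul_le_mul_of_nonneg_left hratio hχ.le
      _ = gapSum m p V := by field_simp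
  have hFFnn : 0 ≤ FF m χ p V := by
    unfold FF
    have hm1 : (0:ℝ) < m - 1 := by linarith
    rw [div_eq_mul_inv, mul_comm χ (m-1)⁻¹, mul_assoc, ← mul_sub]
    exact mul_nonneg (inv_nonneg.mpr hm1.le) (by linarith)
  -- differentiability
  have hFFd : DifferentiableAt ℝ (FF m χ p) V := diffAt_FF hmono
  have hQd : DifferentiableAt ℝ (fun X : EuclideanSpace ℝ (Fin p) => α / 2 * ‖X‖ ^ 2) V := by
    exact DifferentiableAt.const_mul
      (((contDiff_norm_sq (E := EuclideanSpace ℝ (Fin p)) ℝ (n := 1)).differentiable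
        one_ne_zero).differentiableAt) _
  have hFFad : DifferentiableAt ℝ (FFa m χ α p) V := by
    unfold FFa; exact hFFd.add hQd
  -- fderiv FFa V = 0
  have hfder : fderiv ℝ (FFa m χ α p) V = 0 := by
    have h2 := congrArg (InnerProductSpace.toDual ℝ (EuclideanSpace ℝ (Fin p))) hgrad
    simpa [gradient] using h2
  -- curve derivative
  have hcurve : HasDerivAt (fun t : ℝ => t • V) V 1 := by
    simpa using (hasDerivAt_id (1:ℝ)).smul_const V
  have hF1 : HasFDerivAt (FFa m χ α p) (fderiv ℝ (FFa m χ α p) V) ((1:ℝ) • V) := by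
    rw [one_smul]; exact hFFad.hasFDerivAt
  have h1 : HasDerivAt (fun t : ℝ => FFa m χ α p (t • V)) 0 1 := by
    have h := hF1.comp_hasDerivAt 1 hcurve
    rw [hfder] at h
    simpa [Function.comp_def] using h
  -- curve derivative via homogeneity
  have hFFcurve : HasDerivAt (fun t : ℝ => FF m χ p (t • V)) ((1 - m) * FF m χ p V) 1 := by
    have hbase : HasDerivAt (fun x : ℝ => x ^ (1 - m)) ((1 - m) * (1:ℝ) ^ (1 - m - 1)) 1 :=
      Real.hasDerivAt_rpow_const (Or.inl one_ne_zero)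
    have hb2 := hbase.mul_const (FF m χ p V)
    rw [Real.one_rpow] at hb2
    have hev : (fun t : ℝ => FF m χ p (t • V)) =ᶠ[nhds 1]
        (fun t : ℝ => t ^ (1 - m) * FF m χ p V) :=
      (eventually_gt_nhds zero_lt_one).mono fun t ht => FF_homog hmono ht
    have := hb2.congr_of_eventuallyEq hev
    simpa using this
  have hQcurve : HasDerivAt (fun t : ℝ => α / 2 * ‖t • V‖ ^ 2) (α * ‖V‖ ^ 2) 1 := by
    have hfun : (fun t : ℝ => α / 2 * ‖t • V‖ ^ 2)
        = fun t : ℝ => α / 2 * ‖V‖ ^ 2 * t ^ 2 := by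
      funext t
      rw [norm_smul]
      simp [mul_pow, sq_abs]
      ring
    rw [hfun]
    have := (hasDerivAt_pow 2 (1:ℝ)).const_mul (α / 2 * ‖V‖ ^ 2)
    convert this using 1
    · rfl
    · rfl
    norm_num
    ring
  have h2 : HasDerivAt (fun t : ℝ => FFa m χ α p (t • V))
      ((1 - m) * FF m χ p V + α * ‖V‖ ^ 2) 1 := by
    have := hFFcurve.add hQcurve
    exact this
  have heq0 : (0 : ℝ) = (1 - m) * FF m χ p V + α * ‖V‖ ^ 2 := h1.unique h2
  have hneg1 : (1 - m) * FF m χ p V ≤ 0 :=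
    mul_nonpos_iff.mpr (Or.inr ⟨by linarith, hFFnn⟩)
  have hneg2 : α * ‖V‖ ^ 2 < 0 :=
    mul_neg_of_neg_of_pos hα (by positivity)
  linarith
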